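/- For every integer n ≥ 2, the toughness of G_n equals (5n−2)/(4n); consequently τ(G_n) → 5/4 as n → ∞. -/

import Mathlib

open SimpleGraph Filter

def Gn (n : ℕ) : SimpleGraph (Fin (4 * n) ⊕ Fin (4 * n) ⊕ Fin (n - 1)) :=
  SimpleGraph.fromRel (fun a b =>
    match a, b with
    | .inl _, .inl _ => True
    | .inl i, .inr (.inl j) => i = j
    | _, .inr (.inr _) => True
    | .inr (.inr _), _ => True
    | _, _ => False)

/-- number of components of `G − S` -/
noncomputable def numComp {V : Type*} [Fintype V] (G : SimpleGraph V) (S : Finset V) : ℕ :=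
  Nat.card (G.induce ((↑S : Set V)ᶜ)).ConnectedComponent

/- ### auxiliary lemmas -/

section Aux

lemma walk_const {V : Type*} {G : SimpleGraph V} {β : Sort*} (f : V → β)
    (h : ∀ v w, G.Adj v w → f v = f w) : ∀ {v w : V}, G.Walk v w → f v = f w := by
  intro v w p
  induction p with
  | nil => rfl
  | cons a _ ih => exact (h _ _ a).trans ih

/-- lift a function constant on edges to connected components -/
noncomputable def compLift {V : Type*} {G : SimpleGraph V} {β : Sort*} (f : V → β)
    (h : ∀ v w, G.Adj v w → f v = f w) : G.ConnectedComponent → β :=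
  ConnectedComponent.lift f (fun _ _ p _ => walk_const f h p)

lemma compLift_mk {V : Type*} {G : SimpleGraph V} {β : Sort*} (f : V → β)
    (h : ∀ v w, G.Adj v w → f v = f w) (v : V) :
    compLift f h (G.connectedComponentMk v) = f v := rfl

lemma card_le_one_of_subsingleton (α : Type*) [Subsingleton α] : Nat.card α ≤ 1 := by
  have := Nat.card_le_card_of_injective (fun _ : α => ())
    (fun a b _ => Subsingleton.elim a b)
  simpa using this

variable {n : ℕ}

abbrev Vn (n : ℕ) := Fin (4 * n) ⊕ Fin (4 * n) ⊕ Fin (n - 1)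

lemma adj_aa {i j : Fin (4 * n)} : (Gn n).Adj (.inl i) (.inl j) ↔ i ≠ j := by
  constructor
  · rintro ⟨hne, -⟩ rfl; exact hne rfl
  · intro h; exact ⟨by simpa using h, Or.inl trivial⟩

lemma adj_ab {i j : Fin (4 * n)} : (Gn n).Adj (.inl i) (.inr (.inl j)) ↔ i = j := by
  constructor
  · rintro ⟨-, h | h⟩
    · exact h
    · exact absurd h not_false
  · rintro rfl; exact ⟨by simp, Or.inl rfl⟩

lemma not_adj_bb {i j : Fin (4 * n)} : ¬ (Gn n).Adj (.inr (.inl i)) (.inr (.inl j)) := by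
  rintro ⟨-, h | h⟩ <;> exact h

lemma adj_c {j : Fin (n - 1)} {x : Vn n} (h : x ≠ .inr (.inr j)) :
    (Gn n).Adj x (.inr (.inr j)) := by
  refine ⟨h, Or.inl ?_⟩
  rcases x with i | i | i <;> trivial

lemma induce_adj' {V : Type*} {G : SimpleGraph V} {s : Set V} {x y : s} :
    (G.induce s).Adj x y ↔ G.Adj x y := Iff.rfl

end Aux

theorem stmt_12 (n : ℕ) (hn : 2 ≤ n) :
    (∀ S : Finset (Fin (4 * n) ⊕ Fin (4 * n) ⊕ Fin (n - 1)),
        2 ≤ numComp (Gn n) S →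
        ((5 * n - 2 : ℚ) / (4 * n)) * numComp (Gn n) S ≤ S.card) ∧
    (∃ S : Finset (Fin (4 * n) ⊕ Fin (4 * n) ⊕ Fin (n - 1)),
        2 ≤ numComp (Gn n) S ∧
        (S.card : ℚ) = ((5 * n - 2 : ℚ) / (4 * n)) * numComp (Gn n) S) ∧
    Tendsto (fun m : ℕ => ((5 * m - 2 : ℚ) / (4 * m))) atTop (nhds (5 / 4)) := by
  refine ⟨?_, ?_, ?_⟩
  · -- lower bound
    classical
    intro S hS
    set H := (Gn n).induce ((↑S : Set (Vn n))ᶜ) with hH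
    have hS' : 2 ≤ Nat.card H.ConnectedComponent := hS
    -- Step 1: every c-vertex belongs to S
    have hC : ∀ j : Fin (n - 1), (Sum.inr (Sum.inr j) : Vn n) ∈ S := by
      intro j
      by_contra hj
      have hjc : (Sum.inr (Sum.inr j) : Vn n) ∈ ((↑S : Set (Vn n))ᶜ) := by
        rw [Set.mem_compl_iff, Finset.mem_coe]; exact hj
      haveI : Subsingleton H.ConnectedComponent := by
        constructor
        refine ConnectedComponent.ind₂ ?_
        intro x y
        rw [ConnectedComponent.eq]
        have key : ∀ z : ((↑S : Set (Vn n))ᶜ : Set (Vn n)),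
            H.Reachable z ⟨Sum.inr (Sum.inr j), hjc⟩ := by
          rintro ⟨z, hz⟩
          by_cases hzc : z = Sum.inr (Sum.inr j)
          · subst hzc; exact Reachable.refl _
          · exact Adj.reachable (show (Gn n).Adj z _ from adj_c hzc)
        exact (key x).trans (key y).symm
      have := card_le_one_of_subsingleton H.ConnectedComponent
      omega
    -- Step 2: the number of a-vertices in S, lower bound on |S|
    set k := (Finset.univ.filter (fun i : Fin (4 * n) => (Sum.inl i : Vn n) ∈ S)).card with hk
    have hcard_lb : n - 1 + k ≤ S.card := by
      have hsub : ((Finset.univ.filter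
            (fun i : Fin (4 * n) => (Sum.inl i : Vn n) ∈ S)).map
              ⟨Sum.inl, Sum.inl_injective⟩ ∪
          (Finset.univ.map ⟨fun j : Fin (n - 1) => Sum.inr (Sum.inr j),
            fun a b h => by simpa using h⟩)) ⊆ S := by
        intro x hx
        simp only [Finset.mem_union, Finset.mem_map, Finset.mem_filter, Finset.mem_univ,
          true_and, Function.Embedding.coeFn_mk] at hx
        rcases hx with ⟨i, hi, rfl⟩ | ⟨j, -, rfl⟩
        · exact hi
        · exact hC j
      have hdis := Finset.card_le_card hsub
      rw [Finset.card_union_of_disjoint, Finset.card_map, Finset.card_map,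
        Finset.card_univ, Fintype.card_fin] at hdis
      · omega
      · rw [Finset.disjoint_left]
        rintro x hx hy
        simp only [Finset.mem_map, Function.Embedding.coeFn_mk] at hx hy
        obtain ⟨i, -, rfl⟩ := hx
        obtain ⟨j, -, h⟩ := hy
        exact absurd h (by simp)
    have h4nQ : (0 : ℚ) < 4 * n := by exact_mod_cast (by omega : (0:ℕ) < 4 * n)
    have hcast_lb : ((n : ℚ) - 1) + k ≤ (S.card : ℚ) := by
      have := hcard_lb
      have h1 : ((n - 1 + k : ℕ) : ℚ) = (n : ℚ) - 1 + k := by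
        push_cast [Nat.cast_sub (by omega : 1 ≤ n)]; ring
      calc ((n : ℚ) - 1) + k = ((n - 1 + k : ℕ) : ℚ) := h1.symm
        _ ≤ S.card := by exact_mod_cast this
    rw [div_mul_eq_mul_div, div_le_iff₀ h4nQ]
    by_cases hA : ∀ i : Fin (4 * n), (Sum.inl i : Vn n) ∈ S
    · -- all a-vertices removed
      have hk4n : k = 4 * n := by
        rw [hk, Finset.filter_true_of_mem (fun i _ => hA i)]
        simp
      have hcUB : Nat.card H.ConnectedComponent ≤ 4 * n := by
        have hz : ∀ z : ((↑S : Set (Vn n))ᶜ : Set (Vn n)), ∃ i, z.val = Sum.inr (Sum.inl i) := by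
          rintro ⟨z, hzc⟩
          rw [Set.mem_compl_iff, Finset.mem_coe] at hzc
          rcases z with i | i | i
          · exact absurd (hA i) hzc
          · exact ⟨i, rfl⟩
          · exact absurd (hC i) hzc
        set g : ((↑S : Set (Vn n))ᶜ : Set (Vn n)) → Fin (4 * n) :=
          fun z => Sum.elim (fun _ => ⟨0, by omega⟩)
            (Sum.elim id (fun _ => ⟨0, by omega⟩)) z.val with hg
        have hconst : ∀ x y, H.Adj x y → g x = g y := by
          intro x y hadj
          obtain ⟨i, hi⟩ := hz x
          obtain ⟨j, hj⟩ := hz y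
          have hadj' : (Gn n).Adj x.val y.val := hadj
          rw [hi, hj] at hadj'
          exact absurd hadj' not_adj_bb
        have hinj : Function.Injective (compLift g hconst) := by
          refine ConnectedComponent.ind₂ ?_
          intro x y heq
          rw [compLift_mk, compLift_mk] at heq
          obtain ⟨i, hi⟩ := hz x
          obtain ⟨j, hj⟩ := hz y
          have hx' : g x = i := by simp [hg, hi]
          have hy' : g y = j := by simp [hg, hj]
          rw [hx', hy'] at heq
          have : x = y := Subtype.ext (by rw [hi, hj, heq])
          rw [this]
        have := Nat.card_le_card_of_injective _ hinj
        simpa using this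
      have hc' : (numComp (Gn n) S : ℚ) ≤ 4 * n := by
        exact_mod_cast (hcUB : numComp (Gn n) S ≤ 4 * n)
      have hSc' : (5 * (n:ℚ) - 1) + 0 ≤ (S.card : ℚ) := by
        rw [hk4n] at hcast_lb; push_cast at hcast_lb ⊢; linarith
      have hn' : (2 : ℚ) ≤ n := by exact_mod_cast hn
      nlinarith [hc', hSc', hn', Nat.cast_nonneg (α := ℚ) (numComp (Gn n) S)]
    · -- some a-vertex remains
      push_neg at hA
      obtain ⟨i₀, hi₀⟩ := hA
      have hi₀c : (Sum.inl i₀ : Vn n) ∈ ((↑S : Set (Vn n))ᶜ) := by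
        rw [Set.mem_compl_iff, Finset.mem_coe]; exact hi₀
      have hcUB : Nat.card H.ConnectedComponent ≤ k + 1 := by
        set g : ((↑S : Set (Vn n))ᶜ : Set (Vn n)) →
            Option {i : Fin (4 * n) // (Sum.inl i : Vn n) ∈ S} := fun z =>
          Sum.elim (fun _ => none)
            (Sum.elim (fun i => if h : (Sum.inl i : Vn n) ∈ S then some ⟨i, h⟩ else none)
              (fun _ => none)) z.val with hg
        have hconst : ∀ x y, H.Adj x y → g x = g y := by
          rintro ⟨x, hx⟩ ⟨y, hy⟩ hadj
          rw [Set.mem_compl_iff, Finset.mem_coe] at hx hy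
          have hadj' : (Gn n).Adj x y := hadj
          rcases x with i | i | i
          · rcases y with j | j | j
            · simp [hg]
            · have hij : i = j := adj_ab.mp hadj'
              subst hij
              simp [hg, dif_neg hx]
            · exact absurd (hC j) hy
          · rcases y with j | j | j
            · have hji : j = i := adj_ab.mp hadj'.symm
              subst hji
              simp [hg, dif_neg hy]
            · exact absurd hadj' not_adj_bb
            · exact absurd (hC j) hy
          · exact absurd (hC i) hx
        -- reachability of a-vertices outside S to i₀
        have reachA : ∀ (i : Fin (4 * n)) (hmi : (Sum.inl i : Vn n) ∈ ((↑S : Set (Vn n))ᶜ)),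
            H.Reachable ⟨Sum.inl i, hmi⟩ ⟨Sum.inl i₀, hi₀c⟩ := by
          intro i hmi
          by_cases hii : i = i₀
          · subst hii; exact Reachable.refl _
          · exact Adj.reachable
              (show (Gn n).Adj (Sum.inl i) (Sum.inl i₀) from adj_aa.mpr hii)
        have reach0 : ∀ z : ((↑S : Set (Vn n))ᶜ : Set (Vn n)), g z = none →
            H.Reachable z ⟨Sum.inl i₀, hi₀c⟩ := by
          rintro ⟨z, hzc⟩ hznone
          have hz' : z ∉ S := by rwa [Set.mem_compl_iff, Finset.mem_coe] at hzc
          rcases z with i | i | i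
          · exact reachA i _
          · have hiS : (Sum.inl i : Vn n) ∉ S := by
              by_contra hiS
              simp [hg, dif_pos hiS] at hznone
            have hmemi : (Sum.inl i : Vn n) ∈ ((↑S : Set (Vn n))ᶜ) := by
              rw [Set.mem_compl_iff, Finset.mem_coe]; exact hiS
            refine Reachable.trans (Adj.reachable ?_) (reachA i hmemi)
            show (Gn n).Adj (Sum.inr (Sum.inl i)) (Sum.inl i)
            exact (adj_ab.mpr rfl).symm
          · exact absurd (hC i) hz'
        have hinj : Function.Injective (compLift g hconst) := by
          refine ConnectedComponent.ind₂ ?_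
          intro x y heq
          rw [compLift_mk, compLift_mk] at heq
          match hgx : g x with
          | none =>
            rw [hgx] at heq
            rw [ConnectedComponent.eq]
            exact (reach0 x hgx).trans (reach0 y heq.symm).symm
          | some t =>
            rw [hgx] at heq
            have hform : ∀ (z : ((↑S : Set (Vn n))ᶜ : Set (Vn n))), g z = some t →
                z.val = Sum.inr (Sum.inl t.val) := by
              rintro ⟨z, hzc⟩ hzt
              have hz' : z ∉ S := by rwa [Set.mem_compl_iff, Finset.mem_coe] at hzc
              rcases z with i | i | i
              · simp [hg] at hzt
              · by_cases hiS : (Sum.inl i : Vn n) ∈ S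
                · have : some (⟨i, hiS⟩ : {i : Fin (4 * n) // (Sum.inl i : Vn n) ∈ S}) = some t := by
                    rw [← hzt]; simp [hg, dif_pos hiS]
                  have := Option.some_injective _ this
                  simp [← this]
                · simp [hg, dif_neg hiS] at hzt
              · simp [hg] at hzt
            have hx' := hform x hgx
            have hy' := hform y heq.symm
            have : x = y := Subtype.ext (by rw [hx', hy'])
            rw [this]
        have hle := Nat.card_le_card_of_injective _ hinj
        have hcardT : Nat.card (Option {i : Fin (4 * n) // (Sum.inl i : Vn n) ∈ S}) = k + 1 := by
          rw [Nat.card_eq_fintype_card, Fintype.card_option, Fintype.card_subtype]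
        omega
      have hkUB : k ≤ 4 * n - 1 := by
        have hsub : (Finset.univ.filter
            (fun i : Fin (4 * n) => (Sum.inl i : Vn n) ∈ S)) ⊆ Finset.univ.erase i₀ := by
          intro i hi
          rw [Finset.mem_erase]
          refine ⟨?_, Finset.mem_univ _⟩
          rintro rfl
          exact hi₀ (Finset.mem_filter.mp hi).2
        have := Finset.card_le_card hsub
        rw [Finset.card_erase_of_mem (Finset.mem_univ _), Finset.card_univ,
          Fintype.card_fin] at this
        exact this
      have hc' : (numComp (Gn n) S : ℚ) ≤ (k : ℚ) + 1 := by
        have : numComp (Gn n) S ≤ k + 1 := hcUB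
        exact_mod_cast this
      have hk' : (k : ℚ) ≤ 4 * n - 1 := by
        have h1 : ((4 * n - 1 : ℕ) : ℚ) = 4 * (n:ℚ) - 1 := by
          push_cast [Nat.cast_sub (by omega : 1 ≤ 4 * n)]; ring
        calc (k : ℚ) ≤ ((4 * n - 1 : ℕ) : ℚ) := by exact_mod_cast hkUB
          _ = 4 * (n:ℚ) - 1 := h1
      have hn' : (2 : ℚ) ≤ n := by exact_mod_cast hn
      have hcpos : (0 : ℚ) ≤ (numComp (Gn n) S : ℚ) := Nat.cast_nonneg _
      nlinarith [mul_nonneg (by linarith : (0:ℚ) ≤ 4 * (n:ℚ) - 1 - k)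
        (by linarith : (0:ℚ) ≤ (n:ℚ) - 2), hc', hk', hn', hcast_lb, hcpos]
  · -- witness
    have h4n : 0 < 4 * n := by omega
    set a0 : Fin (4 * n) := ⟨0, h4n⟩ with ha0
    set S : Finset (Vn n) :=
      ((Finset.univ.erase a0).map ⟨Sum.inl, Sum.inl_injective⟩) ∪
        (Finset.univ.map ⟨fun j => Sum.inr (Sum.inr j), fun a b h => by simpa using h⟩)
      with hSdef
    have hSa : ∀ i : Fin (4 * n), ((Sum.inl i : Vn n) ∈ S) ↔ i ≠ a0 := by
      intro i; simp [hSdef]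
    have hSb : ∀ i : Fin (4 * n), (Sum.inr (Sum.inl i) : Vn n) ∉ S := by
      intro i; simp [hSdef]
      intro x h
      change (Sum.inr (Sum.inr x) : Vn n) = _ at h
      simp at h
    have hSc : ∀ j : Fin (n - 1), (Sum.inr (Sum.inr j) : Vn n) ∈ S := by
      intro j; simp [hSdef]
      exact ⟨j, rfl⟩
    -- cardinality of S
    have hcard : S.card = 5 * n - 2 := by
      rw [hSdef, Finset.card_union_of_disjoint]
      · rw [Finset.card_map, Finset.card_map, Finset.card_erase_of_mem (Finset.mem_univ _)]
        simp only [Finset.card_univ, Fintype.card_fin]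
        omega
      · rw [Finset.disjoint_left]
        rintro x hx hy
        simp only [Finset.mem_map, Finset.mem_erase, Function.Embedding.coeFn_mk] at hx hy
        obtain ⟨i, -, rfl⟩ := hx
        obtain ⟨j, -, h⟩ := hy
        exact absurd h (by simp)
    -- membership in complement
    have hmem : ∀ x : Vn n, x ∈ ((↑S : Set (Vn n))ᶜ) ↔ x ∉ S := fun x => Iff.rfl
    -- count components
    have hnc : numComp (Gn n) S = 4 * n := by
      set H := (Gn n).induce ((↑S : Set (Vn n))ᶜ) with hH
      set g : Vn n → Fin (4 * n) := Sum.elim id (Sum.elim id (fun _ => a0)) with hg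
      have hconst : ∀ x y : ((↑S : Set (Vn n))ᶜ : Set (Vn n)), H.Adj x y → g x.val = g y.val := by
        rintro ⟨x, hx⟩ ⟨y, hy⟩ hadj
        rw [Set.mem_compl_iff, Finset.mem_coe] at hx hy
        have hadj' : (Gn n).Adj x y := hadj
        rcases x with i | i | i
        · rcases y with j | j | j
          · exact absurd (adj_aa.mp hadj')
              (by simp [(hSa i).not_left.mp (by exact hx), (hSa j).not_left.mp (by exact hy)])
          · simp [hg, adj_ab.mp hadj']
          · exact absurd (hSc j) hy
        · rcases y with j | j | j
          · simp [hg, (adj_ab.mp hadj'.symm)]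
          · exact absurd hadj' not_adj_bb
          · exact absurd (hSc j) hy
        · exact absurd (hSc i) hx
      set F : H.ConnectedComponent → Fin (4 * n) := compLift (fun x => g x.val) hconst with hF
      -- every allowed vertex is reachable from matching b-vertex
      have hreach : ∀ x : ((↑S : Set (Vn n))ᶜ : Set (Vn n)),
          H.Reachable x ⟨Sum.inr (Sum.inl (g x.val)), by
            rw [Set.mem_compl_iff, Finset.mem_coe]; exact hSb _⟩ := by
        rintro ⟨x, hx⟩
        have hx' : x ∉ S := hx
        rcases x with i | i | i
        · have hi : i = a0 := (hSa i).not_left.mp hx'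
          subst hi
          refine Adj.reachable ?_
          show (Gn n).Adj _ _
          simp only [hg, Sum.elim_inl, id]
          exact adj_ab.mpr rfl
        · exact Reachable.refl _
        · exact absurd (hSc i) hx'
      have hbij : Function.Bijective F := by
        constructor
        · refine ConnectedComponent.ind₂ ?_
          rintro x y hxy
          rw [hF, compLift_mk, compLift_mk] at hxy
          rw [ConnectedComponent.eq]
          refine (hreach x).trans ?_
          rw [hxy]
          exact (hreach y).symm
        · intro i
          refine ⟨H.connectedComponentMk ⟨Sum.inr (Sum.inl i), by
            rw [Set.mem_compl_iff, Finset.mem_coe]; exact hSb _⟩, ?_⟩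
          rw [hF, compLift_mk]
          simp [hg]
      rw [numComp, ← hH, Nat.card_eq_of_bijective F hbij, Nat.card_eq_fintype_card,
        Fintype.card_fin]
    refine ⟨S, ?_, ?_⟩
    · rw [hnc]; omega
    · have h1 : ((S.card : ℚ)) = 5 * n - 2 := by
        rw [hcard]; push_cast [Nat.cast_sub (by omega : 2 ≤ 5 * n)]; ring
      rw [h1, hnc]
      have h2 : ((4 * n : ℕ) : ℚ) = 4 * n := by push_cast; ring
      rw [h2, div_mul_cancel₀]
      positivity
  · -- tendsto
    have h1 : Tendsto (fun m : ℕ => ((m : ℚ))⁻¹) atTop (nhds 0) :=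
      tendsto_inv_atTop_zero.comp tendsto_natCast_atTop_atTop
    have h2 : Tendsto (fun m : ℕ => (5/4 : ℚ) - (1/2) * ((m : ℚ))⁻¹) atTop (nhds (5/4)) := by
      have := tendsto_const_nhds (x := (5/4 : ℚ)) (f := atTop (α := ℕ)) |>.sub (h1.const_mul (1/2))
      simpa [mul_comm] using this
    refine h2.congr' ?_
    filter_upwards [eventually_ge_atTop 1] with m hm
    have hm0 : (m : ℚ) ≠ 0 := by
      exact_mod_cast (Nat.pos_of_ne_zero (by omega)).ne'
    field_simp
    ring
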